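/- Let C₀(Q) ⊆ A be a central non-degenerate inclusion, let q ∈ Q be such that the quotient A/J^unif_q is simple, and let ψ be any state of A whose restriction to C₀(Q) is the evaluation map ev_q : f ↦ f(q). Then K_ψ = {a ∈ A : ψ(x a y) = 0 for all x, y ∈ A} equals J^unif_q. -/

import Mathlib

open scoped ComplexOrder
open ZeroAtInfty

-- Cauchy–Schwarz degenerate case for positive functionals
lemma psi_cs_zero {A : Type*} [NonUnitalCStarAlgebra A]
    (ψ : A →L[ℂ] ℂ) (hpos : ∀ a : A, 0 ≤ ψ (star a * a))
    {b : A} (hb : ψ (star b * b) = 0) (a : A) : ψ (star a * b) = 0 := by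
  set u := ψ (star a * b) with hu
  set v := ψ (star b * a) with hv
  set A0 := ψ (star a * a) with hA0
  have expand : ∀ t : ℂ, ψ (star (a + t • b) * (a + t • b))
      = A0 + t * u + (starRingEnd ℂ) t * v := by
    intro t
    have : star (a + t • b) * (a + t • b)
        = star a * a + t • (star a * b) + (starRingEnd ℂ) t • (star b * a)
          + ((starRingEnd ℂ) t * t) • (star b * b) := by
      simp [star_add, star_smul, add_mul, mul_add, smul_mul_assoc, mul_smul_comm, smul_smul]
      ring_nf
      abel
    rw [this]
    simp [map_add, map_smul, hb, smul_eq_mul, hu, hv, hA0]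
  have hE : ∀ t : ℂ, 0 ≤ A0 + t * u + (starRingEnd ℂ) t * v := fun t => expand t ▸ hpos _
  have hre : ∀ t : ℂ, 0 ≤ (A0 + t * u + (starRingEnd ℂ) t * v).re ∧
      (A0 + t * u + (starRingEnd ℂ) t * v).im = 0 := by
    intro t
    have := hE t
    rw [Complex.le_def] at this
    exact ⟨by simpa using this.1, by simpa using this.2.symm⟩
  have hA0im : A0.im = 0 := by simpa using (hre 0).2
  have h1 : u.im + v.im = 0 := by
    have := (hre 1).2
    simp [Complex.add_im, hA0im] at this
    linarith
  have hI : u.re - v.re = 0 := by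
    have := (hre Complex.I).2
    simp [Complex.add_im, Complex.mul_im, hA0im] at this
    linarith
  have hA0re : 0 ≤ A0.re := by simpa using (hre 0).1
  have h3 : v.re = u.re := by linarith
  have h4 : v.im = - u.im := by linarith
  have hfin : ∀ r : ℝ, 0 < r → 0 ≤ A0.re - 2 * r * (u.re ^ 2 + u.im ^ 2) := by
    intro r hr
    have h0 := (hre ((-r : ℝ) * (starRingEnd ℂ) u)).1
    simp only [Complex.add_re, Complex.mul_re, Complex.mul_im, Complex.conj_re,
      Complex.conj_im, Complex.ofReal_re, Complex.ofReal_im, map_mul,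
      Complex.conj_conj, Complex.conj_ofReal] at h0
    rw [h3, h4] at h0
    nlinarith [h0]
  have husq : u.re ^ 2 + u.im ^ 2 ≤ 0 := by
    by_contra h
    push_neg at h
    have h7 := hfin ((A0.re + 1) / (u.re ^ 2 + u.im ^ 2)) (by positivity)
    have h6 : 2 * ((A0.re + 1) / (u.re ^ 2 + u.im ^ 2)) * (u.re ^ 2 + u.im ^ 2)
        = 2 * (A0.re + 1) := by
      rw [mul_assoc, div_mul_cancel₀ _ (ne_of_gt h)]
    linarith
  have : u.re = 0 ∧ u.im = 0 := by constructor <;> nlinarith [sq_nonneg u.re, sq_nonneg u.im]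
  exact Complex.ext this.1 this.2


lemma exists_approx_unit {Q : Type*} [TopologicalSpace Q] [LocallyCompactSpace Q] [T2Space Q]
    (f : C₀(Q, ℂ)) {ε : ℝ} (hε : 0 < ε) : ∃ e : C₀(Q, ℂ), ‖e * f - f‖ ≤ ε := by
  have hcont : Continuous fun p : Q => ((min (‖f p‖ / ε) 1 : ℝ) : ℂ) :=
    Complex.continuous_ofReal.comp (((map_continuous f).norm.div_const ε).min continuous_const)
  have hzero : Filter.Tendsto (fun p : Q => ((min (‖f p‖ / ε) 1 : ℝ) : ℂ))
      (Filter.cocompact Q) (nhds 0) := by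
    have h1 : Filter.Tendsto (fun p : Q => ‖f p‖ / ε) (Filter.cocompact Q) (nhds 0) := by
      simpa using (zero_at_infty f).norm.div_const ε
    have h2 : Filter.Tendsto (fun p : Q => min (‖f p‖ / ε) 1) (Filter.cocompact Q)
        (nhds (min 0 1)) := h1.min tendsto_const_nhds
    rw [min_eq_left zero_le_one] at h2
    simpa [Function.comp_def] using (Complex.continuous_ofReal.tendsto 0).comp h2
  refine ⟨⟨⟨fun p => ((min (‖f p‖ / ε) 1 : ℝ) : ℂ), hcont⟩, hzero⟩, ?_⟩
  set e : C₀(Q, ℂ) := ⟨⟨fun p => ((min (‖f p‖ / ε) 1 : ℝ) : ℂ), hcont⟩, hzero⟩ with he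
  rw [← ZeroAtInftyContinuousMap.norm_toBCF_eq_norm]
  refine BoundedContinuousFunction.norm_le hε.le |>.2 fun p => ?_
  have hev : (e * f - f).toBCF p = ((min (‖f p‖ / ε) 1 : ℝ) : ℂ) * f p - f p := rfl
  rw [hev]
  by_cases h : ‖f p‖ ≤ ε
  · have hm : (0:ℝ) ≤ min (‖f p‖ / ε) 1 := le_min (by positivity) zero_le_one
    have hm1 : min (‖f p‖ / ε) 1 ≤ 1 := min_le_right _ _
    calc ‖((min (‖f p‖ / ε) 1 : ℝ) : ℂ) * f p - f p‖
        = ‖((min (‖f p‖ / ε) 1 : ℝ) : ℂ) - 1‖ * ‖f p‖ := by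
          rw [← norm_mul]; ring_nf
      _ ≤ 1 * ‖f p‖ := by
          apply mul_le_mul_of_nonneg_right _ (norm_nonneg _)
          rw [← Complex.ofReal_one, ← Complex.ofReal_sub, Complex.norm_real]
          rw [Real.norm_eq_abs, abs_le]
          constructor <;> [linarith; linarith]
      _ ≤ ε := by rw [one_mul]; exact h
  · push_neg at h
    have hm : min (‖f p‖ / ε) 1 = 1 :=
      min_eq_right ((one_le_div hε).2 h.le)
    rw [hm]
    simp [hε.le]

/-- The smallest closed two-sided ideal of `A` containing `S` (as a set): the intersection of
all closed two-sided ideals containing `S`. -/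
def closedIdealGenBy {A : Type*} [NonUnitalCStarAlgebra A] (S : Set A) : Set A :=
  ⋂₀ {L : Set A | (∃ I : TwoSidedIdeal A, (I : Set A) = L) ∧ IsClosed L ∧ S ⊆ L}

/-- `J^unif_q`: the closed two-sided ideal of `A` generated by
`C_{0,q}(Q) = {f ∈ C₀(Q) : f q = 0}` (viewed in `A` via the inclusion `ι`). -/
def Junif {Q : Type*} [TopologicalSpace Q] [LocallyCompactSpace Q] [T2Space Q]
    {A : Type*} [NonUnitalCStarAlgebra A] (ι : C₀(Q, ℂ) →⋆ₙₐ[ℂ] A) (q : Q) : Set A :=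
  closedIdealGenBy {a : A | ∃ f : C₀(Q, ℂ), f q = 0 ∧ a = ι f}

/-- `A / J` is a simple C*-algebra, encoded via the correspondence between closed two-sided
ideals of `A / J` and closed two-sided ideals of `A` containing `J`: `J` is proper and the only
closed two-sided ideals of `A` containing `J` are `J` itself and `A`. -/
def QuotientSimpleBy {A : Type*} [NonUnitalCStarAlgebra A] (J : Set A) : Prop :=
  J ≠ Set.univ ∧ ∀ L : TwoSidedIdeal A, IsClosed (L : Set A) → J ⊆ (L : Set A) →
    (L : Set A) = J ∨ (L : Set A) = Set.univ

/-- A state: a positive linear functional of norm one. -/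
def IsState {E : Type*} [SeminormedAddCommGroup E] [NormedSpace ℂ E] [Mul E] [Star E]
    (φ : E →L[ℂ] ℂ) : Prop :=
  (∀ a : E, 0 ≤ φ (star a * a)) ∧ ‖φ‖ = 1

/-- `K_ψ = {a | ψ (x * a * y) = 0 for all x, y}`. -/
def Kset {E F : Type*} [Mul E] [Zero F] (ψ : E → F) : Set E :=
  {a | ∀ x y : E, ψ (x * a * y) = 0}

/-- For a central non-degenerate inclusion `C₀(Q) ⊆ A`, a point `q` with
`A/J^unif_q` simple, and any state `ψ` of `A` restricting to `ev_q` on `C₀(Q)`, one has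
`K_ψ = J^unif_q`. -/
theorem stmt7 {Q : Type*} [TopologicalSpace Q] [LocallyCompactSpace Q] [T2Space Q]
    {A : Type*} [NonUnitalCStarAlgebra A]
    (ι : C₀(Q, ℂ) →⋆ₙₐ[ℂ] A) (hisom : Isometry ι)
    (hcentral : ∀ (f : C₀(Q, ℂ)) (a : A), ι f * a = a * ι f)
    (hnondeg : closure
      (Submodule.span ℂ {x : A | ∃ (f : C₀(Q, ℂ)) (a : A), x = ι f * a} : Set A) = Set.univ)
    (q : Q) (hsimple : QuotientSimpleBy (Junif ι q))
    (ψ : A →L[ℂ] ℂ) (hψ : IsState ψ)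
    (hres : ∀ f : C₀(Q, ℂ), ψ (ι f) = f q) :
    Kset ⇑ψ = Junif ι q := by
  -- `Kset` as a two-sided ideal
  classical
  have hKadd : ∀ {a b : A}, a ∈ Kset ⇑ψ → b ∈ Kset ⇑ψ → a + b ∈ Kset ⇑ψ := by
    intro a b ha hb x y
    have : x * (a + b) * y = x * a * y + x * b * y := by rw [mul_add, add_mul]
    rw [this, map_add, ha x y, hb x y, add_zero]
  set KI : TwoSidedIdeal A := TwoSidedIdeal.mk' (Kset ⇑ψ)
    (by intro x y; simp [Kset])
    (fun ha hb => hKadd ha hb)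
    (by intro a ha x y
        have : x * (-a) * y = -(x * a * y) := by rw [mul_neg, neg_mul]
        rw [this, map_neg, ha x y, neg_zero])
    (by intro b a ha x y
        have : x * (b * a) * y = (x * b) * a * y := by rw [← mul_assoc]
        rw [this, ha (x * b) y])
    (by intro a b ha x y
        have : x * (a * b) * y = x * a * (b * y) := by
          rw [← mul_assoc, mul_assoc (x * a)]
        rw [this, ha x (b * y)]) with hKI
  have hKIcoe : (KI : Set A) = Kset ⇑ψ := TwoSidedIdeal.coe_mk' _ _ _ _ _ _
  have hKclosed : IsClosed (Kset ⇑ψ) := by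
    have : Kset ⇑ψ = ⋂ x : A, ⋂ y : A, {a : A | ψ (x * a * y) = 0} := by
      ext a; simp [Kset, Set.mem_iInter]
    rw [this]
    exact isClosed_iInter fun x => isClosed_iInter fun y =>
      isClosed_eq (ψ.continuous.comp ((continuous_const.mul continuous_id).mul
        continuous_const)) continuous_const
  -- key vanishing: for f with f q = 0, ψ (z * ι f) = 0 for every z
  have hkey : ∀ (f : C₀(Q, ℂ)), f q = 0 → ∀ z : A, ψ (z * ι f) = 0 := by
    intro f hfq z
    have hb : ψ (star (ι f) * ι f) = 0 := by
      rw [← map_star, ← map_mul, hres]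
      simp [hfq]
    have := psi_cs_zero ψ hψ.1 hb (star z)
    rwa [star_star] at this
  -- S ⊆ Kset
  have hS : {a : A | ∃ f : C₀(Q, ℂ), f q = 0 ∧ a = ι f} ⊆ Kset ⇑ψ := by
    rintro _ ⟨f, hfq, rfl⟩ x y
    have hc : x * ι f * y = x * y * ι f := by
      rw [mul_assoc, hcentral f y, ← mul_assoc]
    rw [hc]
    exact hkey f hfq (x * y)
  -- Junif ⊆ Kset
  have hJK : Junif ι q ⊆ Kset ⇑ψ := by
    have hmem : Kset ⇑ψ ∈ {L : Set A | (∃ I : TwoSidedIdeal A, (I : Set A) = L) ∧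
        IsClosed L ∧ {a : A | ∃ f : C₀(Q, ℂ), f q = 0 ∧ a = ι f} ⊆ L} :=
      ⟨⟨KI, hKIcoe⟩, hKclosed, hS⟩
    exact Set.sInter_subset_of_mem hmem
  -- simplicity dichotomy
  rcases hsimple.2 KI (hKIcoe ▸ hKclosed) (hKIcoe ▸ hJK) with h | h
  · rw [hKIcoe] at h; exact h
  · -- Kset = univ leads to a contradiction
    exfalso
    rw [hKIcoe] at h
    have hgen : ∀ (f : C₀(Q, ℂ)) (a : A), ψ (ι f * a) = 0 := by
      intro f a
      have hbd : ∀ ε : ℝ, 0 < ε → ‖ψ (ι f * a)‖ ≤ ε * ‖a‖ := by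
        intro ε hε
        obtain ⟨e, he⟩ := exists_approx_unit f hε
        have h1 : ψ (ι (e * f) * a) = 0 := by
          have hm : ι f ∈ Kset ⇑ψ := h ▸ Set.mem_univ _
          have := hm (ι e) a
          rw [map_mul ι e f]
          exact this
        calc ‖ψ (ι f * a)‖ = ‖ψ (ι f * a) - ψ (ι (e * f) * a)‖ := by rw [h1, sub_zero]
          _ = ‖ψ ((ι f - ι (e * f)) * a)‖ := by rw [← map_sub ψ, ← sub_mul]
          _ ≤ ‖ψ‖ * ‖(ι f - ι (e * f)) * a‖ := ψ.le_opNorm _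
          _ ≤ 1 * (‖ι f - ι (e * f)‖ * ‖a‖) := by
              rw [hψ.2]; exact mul_le_mul_of_nonneg_left (norm_mul_le _ _) zero_le_one
          _ = ‖ι (f - e * f)‖ * ‖a‖ := by rw [one_mul, map_sub]
          _ = ‖f - e * f‖ * ‖a‖ := by
              rw [hisom.norm_map_of_map_zero (map_zero ι)]
          _ ≤ ε * ‖a‖ := by
              apply mul_le_mul_of_nonneg_right _ (norm_nonneg a)
              rw [norm_sub_rev]; exact he
      by_contra hne
      have hpos' : 0 < ‖ψ (ι f * a)‖ := norm_pos_iff.2 hne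
      have := hbd (‖ψ (ι f * a)‖ / (2 * (‖a‖ + 1))) (by positivity)
      have h2 : ‖ψ (ι f * a)‖ / (2 * (‖a‖ + 1)) * ‖a‖ < ‖ψ (ι f * a)‖ := by
        rw [div_mul_eq_mul_div, div_lt_iff₀ (by positivity)]
        nlinarith [norm_nonneg a]
      linarith
    have hker : (Submodule.span ℂ {x : A | ∃ (f : C₀(Q, ℂ)) (a : A), x = ι f * a} : Set A)
        ⊆ (ψ.ker : Set A) := by
      apply Submodule.span_le.2
      rintro _ ⟨f, a, rfl⟩
      exact LinearMap.mem_ker.2 (hgen f a)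
    have hall : ∀ a : A, ψ a = 0 := by
      intro a
      have ha : a ∈ closure (Submodule.span ℂ
          {x : A | ∃ (f : C₀(Q, ℂ)) (a : A), x = ι f * a} : Set A) := by
        rw [hnondeg]; trivial
      have := closure_mono hker ha
      rw [IsClosed.closure_eq (ContinuousLinearMap.isClosed_ker ψ)] at this
      exact this
    have : ψ = 0 := by ext a; exact hall a
    have h12 := hψ.2
    rw [this, norm_zero] at h12
    exact one_ne_zero h12.symm
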